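/- Let x0 ∈ ℝⁿ be nonzero and let a > 0, r > 0. The following four statements are equivalent: (i) v(x0) = a, π(x0) = r, and Qx0 = b·p for some b ∈ ℝ; (ii) r·(Qx0) = a·p and a = r²·(pᵀQ⁻¹p)⁻¹; (iii) v(x0) = a, π(x0) = r, and the tangent hyperplane {x : θ_{x0}(x) = a} equals the hyperplane {x : π(x) = r}; (iv) Q_a ∩ h_r = {x0}. -/

import Mathlib

open Matrix

/-- for x0 ≠ 0, a > 0, r > 0 the following are equivalent:
(i) x0 ∈ Q_a ∩ h_r and Qx0 ∈ ℝp; (ii) r·Qx0 = a·p and a = r²(pᵀQ⁻¹p)⁻¹;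
(iii) x0 ∈ Q_a ∩ h_r and θ_{x0} = h_r as hyperplanes; (iv) Q_a ∩ h_r = {x0}. -/
theorem markowitz_tangency_equivalences {n : ℕ} (hn : 0 < n)
    (Q : Matrix (Fin n) (Fin n) ℝ) (hQ : Q.PosDef)
    (p : Fin n → ℝ) (hp : p ≠ 0)
    (a r : ℝ) (ha : 0 < a) (hr : 0 < r)
    (x0 : Fin n → ℝ) (hx0 : x0 ≠ 0) :
    ((x0 ⬝ᵥ Q.mulVec x0 = a ∧ p ⬝ᵥ x0 = r ∧ ∃ b : ℝ, Q.mulVec x0 = b • p) ↔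
      (r • Q.mulVec x0 = a • p ∧ a = r ^ 2 * (p ⬝ᵥ Q⁻¹.mulVec p)⁻¹)) ∧
    ((x0 ⬝ᵥ Q.mulVec x0 = a ∧ p ⬝ᵥ x0 = r ∧ ∃ b : ℝ, Q.mulVec x0 = b • p) ↔
      (x0 ⬝ᵥ Q.mulVec x0 = a ∧ p ⬝ᵥ x0 = r ∧
        {x : Fin n → ℝ | x0 ⬝ᵥ Q.mulVec x = a} = {x : Fin n → ℝ | p ⬝ᵥ x = r})) ∧
    ((x0 ⬝ᵥ Q.mulVec x0 = a ∧ p ⬝ᵥ x0 = r ∧ ∃ b : ℝ, Q.mulVec x0 = b • p) ↔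
      {x : Fin n → ℝ | x ⬝ᵥ Q.mulVec x = a ∧ p ⬝ᵥ x = r} = {x0}) := by
  classical
  have hpos : ∀ x : Fin n → ℝ, x ≠ 0 → 0 < x ⬝ᵥ Q.mulVec x := fun x hx => by
    simpa using hQ.dotProduct_mulVec_pos hx
  have hself : ∀ v : Fin n → ℝ, v ≠ 0 → 0 < v ⬝ᵥ v := by
    intro v hv
    have h1 : 0 ≤ v ⬝ᵥ v := Finset.sum_nonneg fun i _ => mul_self_nonneg _
    rcases h1.lt_or_eq with h | h
    · exact h
    · exact absurd (dotProduct_self_eq_zero.mp h.symm) hv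
  have hQT : Qᵀ = Q := hQ.1
  have hsym : ∀ x y : Fin n → ℝ, x ⬝ᵥ Q.mulVec y = y ⬝ᵥ Q.mulVec x := by
    intro x y
    rw [dotProduct_mulVec, ← hQT, vecMul_transpose, dotProduct_comm, hQT]
  have hinvQ : Q⁻¹ * Q = 1 := nonsing_inv_mul Q (isUnit_iff_ne_zero.mpr hQ.det_pos.ne')
  have hcancel : ∀ v : Fin n → ℝ, Q⁻¹.mulVec (Q.mulVec v) = v := by
    intro v; rw [mulVec_mulVec, hinvQ, one_mulVec]
  have hc : 0 < p ⬝ᵥ Q⁻¹.mulVec p := by simpa using hQ.inv.dotProduct_mulVec_pos hp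
  have hcne : (p ⬝ᵥ Q⁻¹.mulVec p) ≠ 0 := hc.ne'
  have hbr : ∀ b : ℝ, Q.mulVec x0 = b • p → x0 ⬝ᵥ Q.mulVec x0 = b * (p ⬝ᵥ x0) := by
    intro b hb
    rw [hb, dotProduct_smul, smul_eq_mul, dotProduct_comm]
  -- (i) → (ii)
  have h12 : (x0 ⬝ᵥ Q.mulVec x0 = a ∧ p ⬝ᵥ x0 = r ∧ ∃ b : ℝ, Q.mulVec x0 = b • p) →
      (r • Q.mulVec x0 = a • p ∧ a = r ^ 2 * (p ⬝ᵥ Q⁻¹.mulVec p)⁻¹) := by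
    rintro ⟨hva, hpr, b, hb⟩
    have habr : a = b * r := by rw [← hva, hbr b hb, hpr]
    have hrc : r = b * (p ⬝ᵥ Q⁻¹.mulVec p) := by
      have := congrArg (fun v => p ⬝ᵥ Q⁻¹.mulVec v) hb
      simp only [mulVec_smul, dotProduct_smul, smul_eq_mul] at this
      rw [hcancel] at this
      rw [← hpr, this]
    have key : ∀ b k : ℝ, k ≠ 0 → b * (b * k) = (b * k) ^ 2 * k⁻¹ := by
      intro b k hk; field_simp
    constructor
    · rw [hb, smul_smul, mul_comm, ← habr]
    · rw [habr, hrc]; exact key b _ hcne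
  -- (ii) → (i)
  have h21 : (r • Q.mulVec x0 = a • p ∧ a = r ^ 2 * (p ⬝ᵥ Q⁻¹.mulVec p)⁻¹) →
      (x0 ⬝ᵥ Q.mulVec x0 = a ∧ p ⬝ᵥ x0 = r ∧ ∃ b : ℝ, Q.mulVec x0 = b • p) := by
    rintro ⟨h1, h2⟩
    have hb : Q.mulVec x0 = (r⁻¹ * a) • p := by
      rw [mul_smul, ← h1, smul_smul, inv_mul_cancel₀ hr.ne', one_smul]
    have hpr : p ⬝ᵥ x0 = r := by
      have := congrArg (fun v => p ⬝ᵥ Q⁻¹.mulVec v) hb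
      simp only [mulVec_smul, dotProduct_smul, smul_eq_mul] at this
      rw [hcancel] at this
      rw [this, h2]
      have key : ∀ k : ℝ, k ≠ 0 → r⁻¹ * (r ^ 2 * k⁻¹) * k = r := by
        intro k hk; field_simp
      exact key _ hcne
    refine ⟨?_, hpr, ⟨r⁻¹ * a, hb⟩⟩
    rw [hbr _ hb, hpr]
    field_simp
  -- (i) → (iii)
  have h13 : (x0 ⬝ᵥ Q.mulVec x0 = a ∧ p ⬝ᵥ x0 = r ∧ ∃ b : ℝ, Q.mulVec x0 = b • p) →
      ({x : Fin n → ℝ | x0 ⬝ᵥ Q.mulVec x = a} = {x : Fin n → ℝ | p ⬝ᵥ x = r}) := by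
    rintro ⟨hva, hpr, b, hb⟩
    have habr : a = b * r := by rw [← hva, hbr b hb, hpr]
    have hbne : b ≠ 0 := by
      intro h; rw [h, zero_mul] at habr; exact ha.ne' habr
    ext x
    simp only [Set.mem_setOf_eq]
    have hth : x0 ⬝ᵥ Q.mulVec x = b * (p ⬝ᵥ x) := by
      rw [hsym, hb, dotProduct_smul, smul_eq_mul, dotProduct_comm]
    rw [hth, habr]
    exact ⟨fun h => mul_left_cancel₀ hbne h, fun h => by rw [h]⟩
  -- (iii) → (i): recover the scalar
  have h31 : (∀ y : Fin n → ℝ, p ⬝ᵥ y = 0 → x0 ⬝ᵥ Q.mulVec (x0 + y) = a) →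
      x0 ⬝ᵥ Q.mulVec x0 = a → (∃ b : ℝ, Q.mulVec x0 = b • p) := by
    intro hall hbase
    have hpp : 0 < p ⬝ᵥ p := hself p hp
    set l : ℝ := (p ⬝ᵥ Q.mulVec x0) / (p ⬝ᵥ p) with hl
    set y : Fin n → ℝ := Q.mulVec x0 - l • p with hy
    have hpy : p ⬝ᵥ y = 0 := by
      rw [hy, dotProduct_sub, dotProduct_smul, smul_eq_mul, hl]
      field_simp
      ring
    have h0 : x0 ⬝ᵥ Q.mulVec y = 0 := by
      have := hall y hpy
      rw [mulVec_add, dotProduct_add, hbase] at this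
      linarith
    have h1 : y ⬝ᵥ Q.mulVec x0 = 0 := by rw [← hsym]; exact h0
    have hyy : y ⬝ᵥ y = 0 := by
      calc y ⬝ᵥ y = y ⬝ᵥ (Q.mulVec x0 - l • p) := by rw [← hy]
        _ = y ⬝ᵥ Q.mulVec x0 - l * (y ⬝ᵥ p) := by
            rw [dotProduct_sub, dotProduct_smul, smul_eq_mul]
        _ = 0 := by rw [h1, dotProduct_comm y p, hpy, mul_zero, sub_zero]
    have hyz : y = 0 := dotProduct_self_eq_zero.mp hyy
    exact ⟨l, sub_eq_zero.mp (hy ▸ hyz)⟩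
  -- (i) → (iv)
  have h14 : (x0 ⬝ᵥ Q.mulVec x0 = a ∧ p ⬝ᵥ x0 = r ∧ ∃ b : ℝ, Q.mulVec x0 = b • p) →
      {x : Fin n → ℝ | x ⬝ᵥ Q.mulVec x = a ∧ p ⬝ᵥ x = r} = {x0} := by
    rintro ⟨hva, hpr, b, hb⟩
    have habr : a = b * r := by rw [← hva, hbr b hb, hpr]
    apply Set.eq_singleton_iff_unique_mem.mpr
    refine ⟨⟨hva, hpr⟩, ?_⟩
    rintro x ⟨hxa, hxr⟩
    have hx0x : x0 ⬝ᵥ Q.mulVec x = a := by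
      rw [hsym, hb, dotProduct_smul, smul_eq_mul, dotProduct_comm, hxr, ← habr]
    have hxx0 : x ⬝ᵥ Q.mulVec x0 = a := by rw [hsym]; exact hx0x
    have hd : (x - x0) ⬝ᵥ Q.mulVec (x - x0) = 0 := by
      rw [mulVec_sub, sub_dotProduct, dotProduct_sub, dotProduct_sub,
        hxa, hva, hx0x, hxx0]
      ring
    by_contra hne
    have hdne : x - x0 ≠ 0 := sub_ne_zero.mpr hne
    exact (hpos _ hdne).ne' hd
  -- (iv) → (i)
  have h41 : ({x : Fin n → ℝ | x ⬝ᵥ Q.mulVec x = a ∧ p ⬝ᵥ x = r} = {x0}) →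
      (x0 ⬝ᵥ Q.mulVec x0 = a ∧ p ⬝ᵥ x0 = r ∧ ∃ b : ℝ, Q.mulVec x0 = b • p) := by
    intro hset
    have hmem : x0 ∈ {x : Fin n → ℝ | x ⬝ᵥ Q.mulVec x = a ∧ p ⬝ᵥ x = r} := by
      rw [hset]; rfl
    obtain ⟨hva, hpr⟩ := hmem
    refine ⟨hva, hpr, ?_⟩
    have hpp : 0 < p ⬝ᵥ p := hself p hp
    set l : ℝ := (p ⬝ᵥ Q.mulVec x0) / (p ⬝ᵥ p) with hl
    set y : Fin n → ℝ := Q.mulVec x0 - l • p with hy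
    have hpy : p ⬝ᵥ y = 0 := by
      rw [hy, dotProduct_sub, dotProduct_smul, smul_eq_mul, hl]
      field_simp
      ring
    by_cases hy0 : y = 0
    · exact ⟨l, sub_eq_zero.mp (hy ▸ hy0)⟩
    · exfalso
      have hN : 0 < y ⬝ᵥ y := hself y hy0
      have hD : 0 < y ⬝ᵥ Q.mulVec y := hpos y hy0
      have hyQx0 : y ⬝ᵥ Q.mulVec x0 = y ⬝ᵥ y := by
        calc y ⬝ᵥ Q.mulVec x0
            = y ⬝ᵥ (Q.mulVec x0 - l • p) + l * (y ⬝ᵥ p) := by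
              rw [dotProduct_sub, dotProduct_smul, smul_eq_mul]; ring
          _ = y ⬝ᵥ y + l * (y ⬝ᵥ p) := by rw [← hy]
          _ = y ⬝ᵥ y := by rw [dotProduct_comm y p, hpy, mul_zero, add_zero]
      have hx0Qy : x0 ⬝ᵥ Q.mulVec y = y ⬝ᵥ y := by rw [hsym]; exact hyQx0
      set t : ℝ := -2 * (y ⬝ᵥ y) / (y ⬝ᵥ Q.mulVec y) with ht
      have htne : t ≠ 0 := by
        rw [ht]
        exact div_ne_zero (by nlinarith) hD.ne'
      have hmem1 : x0 + t • y ∈ {x : Fin n → ℝ | x ⬝ᵥ Q.mulVec x = a ∧ p ⬝ᵥ x = r} := by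
        constructor
        · show (x0 + t • y) ⬝ᵥ Q.mulVec (x0 + t • y) = a
          simp only [mulVec_add, mulVec_smul, add_dotProduct, dotProduct_add,
            smul_dotProduct, dotProduct_smul, smul_eq_mul]
          rw [hva, hx0Qy, hyQx0, ht]
          field_simp
          ring
        · show p ⬝ᵥ (x0 + t • y) = r
          rw [dotProduct_add, dotProduct_smul, smul_eq_mul, hpy, mul_zero, add_zero, hpr]
      rw [hset, Set.mem_singleton_iff] at hmem1
      have hz : t • y = 0 := by
        have := congrArg (fun v => v - x0) hmem1
        simpa using this
      rcases smul_eq_zero.mp hz with h | h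
      · exact htne h
      · exact hy0 h
  -- assemble
  refine ⟨⟨h12, h21⟩, ?_, ⟨h14, h41⟩⟩
  constructor
  · intro h
    exact ⟨h.1, h.2.1, h13 h⟩
  · rintro ⟨hva, hpr, hset⟩
    refine ⟨hva, hpr, ?_⟩
    apply h31 ?_ hva
    intro y hpy
    have hm : x0 + y ∈ {x : Fin n → ℝ | p ⬝ᵥ x = r} := by
      simp only [Set.mem_setOf_eq, dotProduct_add, hpr, hpy, add_zero]
    rw [← hset] at hm
    exact hm
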